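/- Let k ≥ 1 be an integer. The equation d_2(λ) = 2·x_1(λ)^k/(1 − x_1(λ)^{k+1}) has exactly one root ρ_k in the interval (√(2+√5), ∞). Moreover, for every integer r ≥ 2, the spectral radius of the tree T_{(k−1,k,...,k,k−1)} (the parameter sequence has r entries, with first and last entries k−1 and all middle entries k; this tree lies in P_{n,e} with e = r + 4 and n = r(k+2) + 6) equals ρ_k; in particular the spectral radius does not depend on r. -/

import Mathlib

open Finset
open scoped Classical

/-- Adjacency matrix of a simple graph over `ℝ`. -/
noncomputable def adjM {V : Type*} [Fintype V] (G : SimpleGraph V) : Matrix V V ℝ :=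
  fun a b => if G.Adj a b then 1 else 0

/-- Spectral radius: the largest eigenvalue of the adjacency matrix. -/
noncomputable def specRad {V : Type*} [Fintype V] (G : SimpleGraph V) : ℝ :=
  sSup {t : ℝ | ∃ f : V → ℝ, f ≠ 0 ∧ (adjM G).mulVec f = t • f}

/-- Characteristic polynomial of the adjacency matrix, as a function `φ_G(λ) = det(λI − A)`. -/
noncomputable def phi {V : Type*} [Fintype V] [DecidableEq V] (G : SimpleGraph V) (l : ℝ) : ℝ :=
  (l • (1 : Matrix V V ℝ) - adjM G).det

/-- `G` is connected with diameter exactly `D`. -/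
def hasDiam {V : Type*} (G : SimpleGraph V) (D : ℕ) : Prop :=
  G.Connected ∧ (∀ u v : V, G.dist u v ≤ D) ∧ ∃ u v : V, G.dist u v = D

/-- `G` is a minimizer graph among connected graphs on `n` vertices with diameter `D`. -/
def IsMinimizer (n D : ℕ) (G : SimpleGraph (Fin n)) : Prop :=
  hasDiam G D ∧ ∀ H : SimpleGraph (Fin n), hasDiam H D → specRad G ≤ specRad H

noncomputable def x1 (l : ℝ) : ℝ := (l - Real.sqrt (l ^ 2 - 4)) / 2
noncomputable def x2 (l : ℝ) : ℝ := (l + Real.sqrt (l ^ 2 - 4)) / 2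
noncomputable def d1f (l : ℝ) : ℝ := l - x1 l ^ 3
noncomputable def d2f (l : ℝ) : ℝ := x2 l ^ 3 - l

/-- Deletion of a vertex from a graph. -/
def delVert {V : Type*} (G : SimpleGraph V) (v : V) : SimpleGraph {u : V // u ≠ v} :=
  SimpleGraph.comap Subtype.val G

noncomputable def pfun {V : Type*} [Fintype V] [DecidableEq V] (G : SimpleGraph V) (v : V)
    (l : ℝ) : ℝ :=
  (phi (delVert G v) l - x1 l * phi G l) / (x2 l - x1 l)

noncomputable def qfun {V : Type*} [Fintype V] [DecidableEq V] (G : SimpleGraph V) (v : V)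
    (l : ℝ) : ℝ :=
  (x2 l * phi G l - phi (delVert G v) l) / (x2 l - x1 l)

/-- The tree `T_{(k_1,…,k_{e−4})}` on `n` vertices: a main path `0 ∼ 1 ∼ ⋯ ∼ (n−e)`,
with a pendant path of 2 vertices attached at `m_1 = 2` and at `m_{e−3} = n−e−2`,
and a single pendant vertex attached at each of `m_2, …, m_{e−4}`, where
`m_{i+1} = m_i + k_i + 1` (here `ks` is 0-indexed: `ks (i-1) = k_i`). -/
def treeT (n e : ℕ) (ks : ℕ → ℕ) :
    SimpleGraph (Fin (n - e + 1) ⊕ Fin 2 ⊕ Fin 2 ⊕ Fin (e - 5)) :=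
  SimpleGraph.fromRel (fun a b =>
    match a, b with
    | Sum.inl a, Sum.inl b => (a : ℕ) + 1 = (b : ℕ)
    | Sum.inl a, Sum.inr (Sum.inl w) => (a : ℕ) = 2 ∧ (w : ℕ) = 0
    | Sum.inr (Sum.inl w), Sum.inr (Sum.inl w') => (w : ℕ) = 0 ∧ (w' : ℕ) = 1
    | Sum.inl a, Sum.inr (Sum.inr (Sum.inl w)) => (a : ℕ) = n - e - 2 ∧ (w : ℕ) = 0
    | Sum.inr (Sum.inr (Sum.inl w)), Sum.inr (Sum.inr (Sum.inl w')) =>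
        (w : ℕ) = 0 ∧ (w' : ℕ) = 1
    | Sum.inl a, Sum.inr (Sum.inr (Sum.inr j)) =>
        (a : ℕ) = 2 + ∑ t ∈ Finset.range ((j : ℕ) + 1), (ks t + 1)
    | _, _ => False)

lemma adjM_zero {V : Type*} [Fintype V] (G : SimpleGraph V) (v u : V) (h : ¬ G.Adj v u) :
    adjM G v u = 0 := by simp [adjM, h]

section Perron
variable {V : Type*} [Fintype V]

lemma perron_bound (A : Matrix V V ℝ) (hsym : ∀ i j, A i j = A j i)
    (hnn : ∀ i j, 0 ≤ A i j) {f : V → ℝ} (hf : ∀ v, 0 < f v) {lam : ℝ}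
    (hAf : A.mulVec f = lam • f) {t : ℝ} {g : V → ℝ} (hg : g ≠ 0)
    (hAg : A.mulVec g = t • g) : t ≤ lam := by
  obtain ⟨v0, hv0⟩ : ∃ v, g v ≠ 0 := by
    by_contra h; push_neg at h; exact hg (funext h)
  set S := ∑ v, f v * |g v| with hS
  have hSpos : 0 < S := by
    apply Finset.sum_pos' (fun v _ => mul_nonneg (hf v).le (abs_nonneg _))
    exact ⟨v0, Finset.mem_univ _, mul_pos (hf v0) (abs_pos.mpr hv0)⟩
  have hstep : ∀ v, f v * |t * g v| ≤ f v * ∑ u, A v u * |g u| := by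
    intro v
    apply mul_le_mul_of_nonneg_left _ (hf v).le
    have h1 : t * g v = ∑ u, A v u * g u := by
      have := congrFun hAg v
      simpa [Matrix.mulVec, dotProduct, Pi.smul_apply] using this.symm
    rw [h1]
    calc |∑ u, A v u * g u| ≤ ∑ u, |A v u * g u| := Finset.abs_sum_le_sum_abs _ _
      _ = ∑ u, A v u * |g u| := by
          refine Finset.sum_congr rfl fun u _ => ?_
          rw [abs_mul, abs_of_nonneg (hnn v u)]
  have key : t * S ≤ lam * S := by
    calc t * S ≤ |t| * S := mul_le_mul_of_nonneg_right (le_abs_self t) hSpos.le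
      _ = ∑ v, f v * |t * g v| := by
          rw [Finset.mul_sum]
          exact Finset.sum_congr rfl fun v _ => by rw [abs_mul]; ring
      _ ≤ ∑ v, f v * ∑ u, A v u * |g u| := Finset.sum_le_sum fun v _ => hstep v
      _ = ∑ u, (∑ v, A v u * f v) * |g u| := by
          simp only [Finset.mul_sum, Finset.sum_mul]
          rw [Finset.sum_comm]
          exact Finset.sum_congr rfl fun u _ => Finset.sum_congr rfl fun v _ => by ring
      _ = ∑ u, (lam * f u) * |g u| := by
          refine Finset.sum_congr rfl fun u _ => ?_
          congr 1
          have := congrFun hAf u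
          have h2 : ∑ v, A v u * f v = ∑ v, A u v * f v :=
            Finset.sum_congr rfl fun v _ => by rw [hsym]
          rw [h2]
          simpa [Matrix.mulVec, dotProduct, Pi.smul_apply] using this
      _ = lam * S := by rw [Finset.mul_sum]; exact Finset.sum_congr rfl fun v _ => by ring
  exact le_of_mul_le_mul_right key hSpos

end Perron


lemma specRad_eq_of_posEigen {V : Type*} [Fintype V] [Nonempty V] (G : SimpleGraph V)
    {f : V → ℝ} (hf : ∀ v, 0 < f v) {lam : ℝ}
    (hAf : (adjM G).mulVec f = lam • f) : specRad G = lam := by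
  have hsym : ∀ i j, adjM G i j = adjM G j i := by
    intro i j; simp only [adjM, G.adj_comm]
  have hnn : ∀ i j, 0 ≤ adjM G i j := by
    intro i j; simp only [adjM]; split <;> norm_num
  have hfne : f ≠ 0 := by
    intro h
    have := hf (Classical.arbitrary V)
    rw [h] at this; simp at this
  apply IsGreatest.csSup_eq
  constructor
  · exact ⟨f, hfne, hAf⟩
  · rintro t ⟨g, hg, hAg⟩
    exact perron_bound (adjM G) hsym hnn hf hAf hg hAg


lemma sqrt_sq_fact {l : ℝ} (hl : 2 < l) : (Real.sqrt (l ^ 2 - 4)) ^ 2 = l ^ 2 - 4 :=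
  Real.sq_sqrt (by nlinarith)

lemma x_facts {l : ℝ} (hl : 2 < l) :
    0 < x1 l ∧ x1 l < 1 ∧ 1 < x2 l ∧ x1 l * x2 l = 1 ∧ x1 l + x2 l = l := by
  have hs2 := sqrt_sq_fact hl
  have hs0 : 0 ≤ Real.sqrt (l ^ 2 - 4) := Real.sqrt_nonneg _
  set s := Real.sqrt (l ^ 2 - 4) with hs
  have hsl : s < l := by nlinarith
  have hsgt : l - 2 < s := by nlinarith
  refine ⟨by unfold x1; rw [← hs]; linarith, by unfold x1; rw [← hs]; linarith,
    by unfold x2; rw [← hs]; linarith, ?_, by unfold x1 x2; rw [← hs]; ring⟩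
  unfold x1 x2; rw [← hs]; nlinarith

lemma x2_mono {a b : ℝ} (ha : 2 < a) (hab : a < b) : x2 a < x2 b := by
  have h1 : Real.sqrt (a ^ 2 - 4) ≤ Real.sqrt (b ^ 2 - 4) :=
    Real.sqrt_le_sqrt (by nlinarith)
  unfold x2; linarith

lemma x1_anti {a b : ℝ} (ha : 2 < a) (hab : a < b) : x1 b < x1 a := by
  obtain ⟨_, _, h2a, h4a, _⟩ := x_facts ha
  obtain ⟨h1b, _, h2b, h4b, _⟩ := x_facts (ha.trans hab)
  have := x2_mono ha hab
  have hx2a : 0 < x2 a := by linarith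
  have hx2b : 0 < x2 b := by linarith
  nlinarith

lemma d2f_mono {a b : ℝ} (ha : 2 < a) (hab : a < b) : d2f a < d2f b := by
  obtain ⟨h1a, _, h2a, _, h5a⟩ := x_facts ha
  obtain ⟨h1b, _, h2b, _, h5b⟩ := x_facts (ha.trans hab)
  have hm := x2_mono ha hab
  have hx1 := x1_anti ha hab
  unfold d2f
  have : x2 a ^ 3 - x2 a < x2 b ^ 3 - x2 b := by
    nlinarith [sq_nonneg (x2 a + x2 b), sq_nonneg (x2 b - x2 a), mul_pos (sub_pos.mpr hm) (mul_pos (lt_trans one_pos h2a) (lt_trans one_pos h2b))]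
  have hda : d2f a = x2 a ^ 3 - x2 a - x1 a := by unfold d2f; linarith
  nlinarith

lemma rhs_anti {k : ℕ} (hk : 1 ≤ k) {a b : ℝ} (ha : 2 < a) (hab : a < b) :
    2 * x1 b ^ k / (1 - x1 b ^ (k + 1)) < 2 * x1 a ^ k / (1 - x1 a ^ (k + 1)) := by
  obtain ⟨h1a, h2a, _, _, _⟩ := x_facts ha
  obtain ⟨h1b, h2b, _, _, _⟩ := x_facts (ha.trans hab)
  have hx := x1_anti ha hab
  have hpk : x1 b ^ k < x1 a ^ k := pow_lt_pow_left₀ hx h1b.le (by omega)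
  have hpk1 : x1 b ^ (k+1) < x1 a ^ (k+1) := pow_lt_pow_left₀ hx h1b.le (by omega)
  have hda : x1 a ^ (k+1) < 1 := pow_lt_one₀ h1a.le h2a (by omega)
  have hdb : x1 b ^ (k+1) < 1 := pow_lt_one₀ h1b.le h2b (by omega)
  have hpbpos : 0 < x1 b ^ k := pow_pos h1b k
  have hppos : 0 < x1 a ^ k := pow_pos h1a k
  rw [div_lt_div_iff₀ (by linarith) (by linarith)]
  nlinarith


lemma cont_x1 : Continuous x1 := by
  unfold x1
  fun_prop

lemma cont_d2f : Continuous d2f := by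
  unfold d2f x2
  fun_prop

-- l₀ facts
lemma l0_sq : (Real.sqrt (2 + Real.sqrt 5)) ^ 2 = 2 + Real.sqrt 5 :=
  Real.sq_sqrt (by positivity)

lemma sqrt5_sq : (Real.sqrt 5) ^ 2 = 5 := Real.sq_sqrt (by norm_num)

lemma sqrt5_lt : 2 < Real.sqrt 5 ∧ Real.sqrt 5 < 3 := by
  have h := sqrt5_sq
  have h0 := Real.sqrt_nonneg 5
  constructor <;> nlinarith

lemma l0_gt_two : 2 < Real.sqrt (2 + Real.sqrt 5) := by
  have h := l0_sq
  have h0 := Real.sqrt_nonneg (2 + Real.sqrt 5)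
  have h5 := sqrt5_lt
  nlinarith

lemma l0_lt_three : Real.sqrt (2 + Real.sqrt 5) < 3 := by
  have h := l0_sq
  have h0 := Real.sqrt_nonneg (2 + Real.sqrt 5)
  have h5 := sqrt5_lt
  nlinarith

lemma d2f_l0 : d2f (Real.sqrt (2 + Real.sqrt 5)) = 0 := by
  set l := Real.sqrt (2 + Real.sqrt 5) with hldef
  have hl2 : l ^ 2 = 2 + Real.sqrt 5 := l0_sq
  have hl := l0_gt_two
  have h5 := sqrt5_sq
  have h5lt := sqrt5_lt
  have hs2 : (Real.sqrt (l ^ 2 - 4)) ^ 2 = l ^ 2 - 4 := Real.sq_sqrt (by nlinarith)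
  set s := Real.sqrt (l ^ 2 - 4) with hsdef
  have hs0 : 0 ≤ s := Real.sqrt_nonneg _
  have hs2' : s ^ 2 = Real.sqrt 5 - 2 := by rw [hs2, hl2]; ring
  have aux : s * (Real.sqrt 5 + 1) = l * (3 - Real.sqrt 5) := by
    have hA : 0 ≤ s * (Real.sqrt 5 + 1) := by nlinarith
    have hB : 0 ≤ l * (3 - Real.sqrt 5) := by nlinarith
    have hsq : (s * (Real.sqrt 5 + 1)) ^ 2 = (l * (3 - Real.sqrt 5)) ^ 2 := by
      nlinarith
    calc s * (Real.sqrt 5 + 1) = Real.sqrt ((s * (Real.sqrt 5 + 1))^2) := (Real.sqrt_sq hA).symm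
      _ = Real.sqrt ((l * (3 - Real.sqrt 5))^2) := by rw [hsq]
      _ = l * (3 - Real.sqrt 5) := Real.sqrt_sq hB
  show x2 l ^ 3 - l = 0
  unfold x2
  rw [← hsdef]
  nlinarith [aux, hs2', hl2]


lemma root_exists_unique (k : ℕ) (hk : 1 ≤ k) :
    ∃ ρ : ℝ, (Real.sqrt (2 + Real.sqrt 5) < ρ ∧
      d2f ρ = 2 * x1 ρ ^ k / (1 - x1 ρ ^ (k + 1))) ∧
      ∀ y : ℝ, Real.sqrt (2 + Real.sqrt 5) < y →
        d2f y = 2 * x1 y ^ k / (1 - x1 y ^ (k + 1)) → y = ρ := by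
  set l0 := Real.sqrt (2 + Real.sqrt 5) with hl0
  have hl02 := l0_gt_two
  have hl03 := l0_lt_three
  set g : ℝ → ℝ := fun l => d2f l - 2 * x1 l ^ k / (1 - x1 l ^ (k + 1)) with hg
  have hgcont : ContinuousOn g (Set.Icc l0 3) := by
    apply ContinuousOn.sub cont_d2f.continuousOn
    apply ContinuousOn.div
    · exact (continuous_const.mul (cont_x1.pow k)).continuousOn
    · exact (continuous_const.sub (cont_x1.pow (k+1))).continuousOn
    · intro l hl
      have hl2 : 2 < l := lt_of_lt_of_le hl02 hl.1
      obtain ⟨h1, h2, _, _, _⟩ := x_facts hl2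
      have : x1 l ^ (k+1) < 1 := pow_lt_one₀ h1.le h2 (by omega)
      intro h0
      rw [sub_eq_zero] at h0
      exact this.ne h0.symm
  have hgl0 : g l0 < 0 := by
    obtain ⟨h1, h2, _, _, _⟩ := x_facts hl02
    have hnum : 0 < 2 * x1 l0 ^ k := by positivity
    have hden : 0 < 1 - x1 l0 ^ (k + 1) := by
      have : x1 l0 ^ (k+1) < 1 := pow_lt_one₀ h1.le h2 (by omega)
      linarith
    have : 0 < 2 * x1 l0 ^ k / (1 - x1 l0 ^ (k + 1)) := div_pos hnum hden
    simp only [hg]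
    rw [d2f_l0]
    linarith
  have hg3 : 0 < g 3 := by
    obtain ⟨h1, h2, h3, h4, h5⟩ := x_facts (by norm_num : (2:ℝ) < 3)
    have hs5 : 2 < Real.sqrt 5 := by
      have := Real.sq_sqrt (by norm_num : (0:ℝ) ≤ 5)
      nlinarith [Real.sqrt_nonneg 5]
    have hx2 : 5/2 < x2 3 := by
      unfold x2
      have : Real.sqrt (3 ^ 2 - 4) = Real.sqrt 5 := by norm_num
      rw [this]; linarith
    have hd2 : 101/8 < d2f 3 := by
      unfold d2f; nlinarith [hx2, pow_pos (lt_trans one_pos h3) 3, sq_nonneg (x2 3)]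
    have hx1 : x1 3 < 1/2 := by
      have : x1 3 * x2 3 = 1 := h4
      nlinarith
    have hpk : x1 3 ^ k ≤ x1 3 := by
      calc x1 3 ^ k ≤ x1 3 ^ 1 := pow_le_pow_of_le_one h1.le h2.le hk
        _ = x1 3 := pow_one _
    have hpk1 : x1 3 ^ (k+1) ≤ x1 3 ^ 2 := pow_le_pow_of_le_one h1.le h2.le (by omega)
    have hden : 3/4 < 1 - x1 3 ^ (k+1) := by nlinarith
    have hfrac : 2 * x1 3 ^ k / (1 - x1 3 ^ (k + 1)) ≤ 4/3 := by
      rw [div_le_iff₀ (by linarith)]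
      nlinarith [pow_pos h1 k]
    simp only [hg]
    linarith
  have hsub : Set.Ioo (g l0) (g 3) ⊆ g '' Set.Ioo l0 3 :=
    intermediate_value_Ioo (le_of_lt hl03) hgcont
  obtain ⟨ρ, hρmem, hρ0⟩ := hsub ⟨hgl0, hg3⟩
  refine ⟨ρ, ⟨hρmem.1, by simp only [hg] at hρ0; linarith⟩, ?_⟩
  intro y hy hyeq
  have hρ2 : 2 < ρ := lt_trans hl02 hρmem.1
  have hy2 : 2 < y := lt_trans hl02 hy
  have hρeq : d2f ρ = 2 * x1 ρ ^ k / (1 - x1 ρ ^ (k + 1)) := by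
    simp only [hg] at hρ0; linarith
  rcases lt_trichotomy y ρ with h | h | h
  · exfalso
    have h1 := d2f_mono hy2 h
    have h2 := rhs_anti hk hy2 h
    rw [hyeq, hρeq] at h1
    linarith
  · exact h
  · exfalso
    have h1 := d2f_mono hρ2 h
    have h2 := rhs_anti hk hρ2 h
    rw [hyeq, hρeq] at h1
    linarith


section adjlemmas
variable {n e : ℕ} {ks : ℕ → ℕ}

lemma adjT_inl_inl {a b : Fin (n - e + 1)} :
    (treeT n e ks).Adj (Sum.inl a) (Sum.inl b) ↔ ((a:ℕ)+1 = b ∨ (b:ℕ)+1 = a) := by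
  simp only [treeT, SimpleGraph.fromRel_adj]
  constructor
  · rintro ⟨_, h⟩; exact h
  · intro h
    refine ⟨?_, h⟩
    intro hab
    injection hab with hab'
    rw [hab'] at h
    omega

lemma adjT_inl_w1 {a : Fin (n - e + 1)} {w : Fin 2} :
    (treeT n e ks).Adj (Sum.inl a) (Sum.inr (Sum.inl w)) ↔ ((a:ℕ) = 2 ∧ (w:ℕ) = 0) := by
  simp only [treeT, SimpleGraph.fromRel_adj]
  constructor
  · rintro ⟨_, h | h⟩; exact h; exact h.elim
  · intro h; exact ⟨by simp, Or.inl h⟩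

lemma adjT_inl_w2 {a : Fin (n - e + 1)} {w : Fin 2} :
    (treeT n e ks).Adj (Sum.inl a) (Sum.inr (Sum.inr (Sum.inl w))) ↔
      ((a:ℕ) = n - e - 2 ∧ (w:ℕ) = 0) := by
  simp only [treeT, SimpleGraph.fromRel_adj]
  constructor
  · rintro ⟨_, h | h⟩; exact h; exact h.elim
  · intro h; exact ⟨by simp, Or.inl h⟩

lemma adjT_inl_leaf {a : Fin (n - e + 1)} {j : Fin (e - 5)} :
    (treeT n e ks).Adj (Sum.inl a) (Sum.inr (Sum.inr (Sum.inr j))) ↔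
      (a:ℕ) = 2 + ∑ t ∈ Finset.range ((j : ℕ) + 1), (ks t + 1) := by
  simp only [treeT, SimpleGraph.fromRel_adj]
  constructor
  · rintro ⟨_, h | h⟩; exact h; exact h.elim
  · intro h; exact ⟨by simp, Or.inl h⟩

lemma adjT_w1_w1 {w w' : Fin 2} :
    (treeT n e ks).Adj (Sum.inr (Sum.inl w)) (Sum.inr (Sum.inl w')) ↔
      (((w:ℕ) = 0 ∧ (w':ℕ) = 1) ∨ ((w':ℕ) = 0 ∧ (w:ℕ) = 1)) := by
  simp only [treeT, SimpleGraph.fromRel_adj]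
  constructor
  · rintro ⟨_, h⟩; exact h
  · intro h
    refine ⟨?_, h⟩
    intro hw
    injection hw with hw'
    injection hw' with hw''
    rw [hw''] at h
    omega

lemma adjT_w2_w2 {w w' : Fin 2} :
    (treeT n e ks).Adj (Sum.inr (Sum.inr (Sum.inl w))) (Sum.inr (Sum.inr (Sum.inl w'))) ↔
      (((w:ℕ) = 0 ∧ (w':ℕ) = 1) ∨ ((w':ℕ) = 0 ∧ (w:ℕ) = 1)) := by
  simp only [treeT, SimpleGraph.fromRel_adj]
  constructor
  · rintro ⟨_, h⟩; exact h
  · intro h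
    refine ⟨?_, h⟩
    intro hw
    injection hw with hw'
    injection hw' with hw''
    injection hw'' with hw'''
    rw [hw'''] at h
    omega

lemma adjT_w1_w2 {w w' : Fin 2} :
    ¬ (treeT n e ks).Adj (Sum.inr (Sum.inl w)) (Sum.inr (Sum.inr (Sum.inl w'))) := by
  simp only [treeT, SimpleGraph.fromRel_adj]
  rintro ⟨_, h | h⟩ <;> exact h.elim

lemma adjT_w1_leaf {w : Fin 2} {j : Fin (e - 5)} :
    ¬ (treeT n e ks).Adj (Sum.inr (Sum.inl w)) (Sum.inr (Sum.inr (Sum.inr j))) := by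
  simp only [treeT, SimpleGraph.fromRel_adj]
  rintro ⟨_, h | h⟩ <;> exact h.elim

lemma adjT_w2_leaf {w : Fin 2} {j : Fin (e - 5)} :
    ¬ (treeT n e ks).Adj (Sum.inr (Sum.inr (Sum.inl w))) (Sum.inr (Sum.inr (Sum.inr j))) := by
  simp only [treeT, SimpleGraph.fromRel_adj]
  rintro ⟨_, h | h⟩ <;> exact h.elim

lemma adjT_leaf_leaf {j j' : Fin (e - 5)} :
    ¬ (treeT n e ks).Adj (Sum.inr (Sum.inr (Sum.inr j))) (Sum.inr (Sum.inr (Sum.inr j'))) := by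
  simp only [treeT, SimpleGraph.fromRel_adj]
  rintro ⟨_, h | h⟩ <;> exact h.elim

end adjlemmas

section sumhelp

lemma ind_sum {M : ℕ} (g : Fin M → ℝ) (P : Fin M → Prop) [DecidablePred P] (c : Fin M)
    (h : ∀ b, P b ↔ b = c) :
    ∑ b : Fin M, (if P b then (1:ℝ) else 0) * g b = g c := by
  have h2 : ∀ b : Fin M, (if P b then (1:ℝ) else 0) * g b = if b = c then g b else 0 := by
    intro b
    by_cases hb : P b
    · rw [if_pos hb, if_pos ((h b).mp hb), one_mul]
    · rw [if_neg hb, if_neg (fun hc => hb ((h b).mpr hc)), zero_mul]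
  rw [Finset.sum_congr rfl (fun b _ => h2 b)]
  simp

lemma ind_sum_zero {M : ℕ} (g : Fin M → ℝ) (P : Fin M → Prop) [DecidablePred P]
    (h : ∀ b, ¬ P b) :
    ∑ b : Fin M, (if P b then (1:ℝ) else 0) * g b = 0 := by
  apply Finset.sum_eq_zero
  intro b _
  rw [if_neg (h b), zero_mul]

end sumhelp


lemma adjM_ite {V : Type*} [Fintype V] (G : SimpleGraph V) (v u : V) (P : Prop) [Decidable P]
    (h : G.Adj v u ↔ P) : adjM G v u = if P then 1 else 0 := by
  simp only [adjM]
  split_ifs with h1 h2 h2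
  · rfl
  · exact absurd (h.mp h1) h2
  · exact absurd (h.mpr h2) h1
  · rfl

lemma adjM_comm {V : Type*} [Fintype V] (G : SimpleGraph V) (v u : V) :
    adjM G v u = adjM G u v := by
  simp only [adjM, SimpleGraph.adj_comm]

section blocks
variable (n e : ℕ) (ks : ℕ → ℕ) (g : (Fin (n-e+1) ⊕ Fin 2 ⊕ Fin 2 ⊕ Fin (e-5)) → ℝ)

lemma block1 (i : Fin (n-e+1)) :
    ∑ b : Fin (n-e+1), adjM (treeT n e ks) (Sum.inl i) (Sum.inl b) * g (Sum.inl b)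
      = (∑ b : Fin (n-e+1), (if (i:ℕ)+1 = (b:ℕ) then (1:ℝ) else 0) * g (Sum.inl b))
        + ∑ b : Fin (n-e+1), (if (b:ℕ)+1 = (i:ℕ) then (1:ℝ) else 0) * g (Sum.inl b) := by
  rw [← Finset.sum_add_distrib]
  refine Finset.sum_congr rfl fun b _ => ?_
  rw [adjM_ite _ _ _ _ adjT_inl_inl]
  by_cases h1 : (i:ℕ)+1 = (b:ℕ) <;> by_cases h2 : (b:ℕ)+1 = (i:ℕ)
  · omega
  all_goals simp [h1, h2]

lemma block2 (i : Fin (n-e+1)) :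
    ∑ w : Fin 2, adjM (treeT n e ks) (Sum.inl i) (Sum.inr (Sum.inl w)) * g (Sum.inr (Sum.inl w))
      = (if (i:ℕ) = 2 then (1:ℝ) else 0) * g (Sum.inr (Sum.inl 0)) := by
  rw [Fin.sum_univ_two, adjM_ite _ _ _ _ adjT_inl_w1, adjM_ite _ _ _ _ adjT_inl_w1]
  simp

lemma block3 (i : Fin (n-e+1)) :
    ∑ w : Fin 2, adjM (treeT n e ks) (Sum.inl i) (Sum.inr (Sum.inr (Sum.inl w)))
        * g (Sum.inr (Sum.inr (Sum.inl w)))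
      = (if (i:ℕ) = n - e - 2 then (1:ℝ) else 0) * g (Sum.inr (Sum.inr (Sum.inl 0))) := by
  rw [Fin.sum_univ_two, adjM_ite _ _ _ _ adjT_inl_w2, adjM_ite _ _ _ _ adjT_inl_w2]
  simp

lemma block4 (i : Fin (n-e+1)) :
    ∑ j : Fin (e-5), adjM (treeT n e ks) (Sum.inl i) (Sum.inr (Sum.inr (Sum.inr j)))
        * g (Sum.inr (Sum.inr (Sum.inr j)))
      = ∑ j : Fin (e-5), (if (i:ℕ) = 2 + ∑ t ∈ Finset.range ((j:ℕ)+1), (ks t + 1)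
          then (1:ℝ) else 0) * g (Sum.inr (Sum.inr (Sum.inr j))) :=
  Finset.sum_congr rfl fun j _ => by rw [adjM_ite _ _ _ _ adjT_inl_leaf]

lemma blockW1 (w : Fin 2) :
    ∑ b : Fin (n-e+1), adjM (treeT n e ks) (Sum.inr (Sum.inl w)) (Sum.inl b) * g (Sum.inl b)
      = ∑ b : Fin (n-e+1), (if ((b:ℕ) = 2 ∧ (w:ℕ) = 0) then (1:ℝ) else 0) * g (Sum.inl b) :=
  Finset.sum_congr rfl fun b _ => by
    rw [adjM_comm, adjM_ite _ _ _ _ adjT_inl_w1]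

lemma blockV1 (w : Fin 2) :
    ∑ b : Fin (n-e+1), adjM (treeT n e ks) (Sum.inr (Sum.inr (Sum.inl w))) (Sum.inl b)
        * g (Sum.inl b)
      = ∑ b : Fin (n-e+1), (if ((b:ℕ) = n - e - 2 ∧ (w:ℕ) = 0) then (1:ℝ) else 0)
          * g (Sum.inl b) :=
  Finset.sum_congr rfl fun b _ => by
    rw [adjM_comm, adjM_ite _ _ _ _ adjT_inl_w2]

lemma blockL1 (j : Fin (e-5)) :
    ∑ b : Fin (n-e+1), adjM (treeT n e ks) (Sum.inr (Sum.inr (Sum.inr j))) (Sum.inl b)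
        * g (Sum.inl b)
      = ∑ b : Fin (n-e+1), (if ((b:ℕ) = 2 + ∑ t ∈ Finset.range ((j:ℕ)+1), (ks t + 1))
          then (1:ℝ) else 0) * g (Sum.inl b) :=
  Finset.sum_congr rfl fun b _ => by
    rw [adjM_comm, adjM_ite _ _ _ _ adjT_inl_leaf]

end blocks

noncomputable def pathval (x ρ : ℝ) (k N : ℕ) (i : ℕ) : ℝ :=
  if i = 0 ∨ i = N then (1+x^(k+1))/(2*ρ)
  else if i = 1 ∨ i = N-1 then (1+x^(k+1))/2
  else x^((i-1) % (k+1)) + x^(k+1 - (i-1) % (k+1))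

noncomputable def evec (x ρ : ℝ) (k N : ℕ) {A B : ℕ} :
    Fin A ⊕ Fin 2 ⊕ Fin 2 ⊕ Fin B → ℝ
  | Sum.inl i => pathval x ρ k N (i:ℕ)
  | Sum.inr (Sum.inl w) => if (w:ℕ) = 0 then (1+x^(k+1))/2 else (1+x^(k+1))/(2*ρ)
  | Sum.inr (Sum.inr (Sum.inl w)) => if (w:ℕ) = 0 then (1+x^(k+1))/2 else (1+x^(k+1))/(2*ρ)
  | Sum.inr (Sum.inr (Sum.inr _)) => (1+x^(k+1))/ρ

lemma pathval_zero (x ρ : ℝ) (k N : ℕ) : pathval x ρ k N 0 = (1+x^(k+1))/(2*ρ) := by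
  unfold pathval; rw [if_pos (Or.inl rfl)]

lemma pathval_last (x ρ : ℝ) (k N : ℕ) : pathval x ρ k N N = (1+x^(k+1))/(2*ρ) := by
  unfold pathval; rw [if_pos (Or.inr rfl)]

lemma pathval_one (x ρ : ℝ) (k N : ℕ) (hN : 6 ≤ N) : pathval x ρ k N 1 = (1+x^(k+1))/2 := by
  unfold pathval; rw [if_neg (by omega), if_pos (Or.inl rfl)]

lemma pathval_pen (x ρ : ℝ) (k N : ℕ) (hN : 6 ≤ N) :
    pathval x ρ k N (N-1) = (1+x^(k+1))/2 := by
  unfold pathval; rw [if_neg (by omega), if_pos (Or.inr rfl)]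

lemma pathval_mid (x ρ : ℝ) (k N i m d : ℕ) (hN : 6 ≤ N) (h2 : 2 ≤ i) (hi : i + 2 ≤ N)
    (hd : d ≤ k) (hsplit : i - 1 = (k+1)*m + d) :
    pathval x ρ k N i = x^d + x^(k+1-d) := by
  unfold pathval
  rw [if_neg (by omega), if_neg (by omega), hsplit, Nat.mul_add_mod,
    Nat.mod_eq_of_lt (by omega)]


lemma blockW2 (n e : ℕ) (ks : ℕ → ℕ) (g : (Fin (n-e+1) ⊕ Fin 2 ⊕ Fin 2 ⊕ Fin (e-5)) → ℝ)
    (w : Fin 2) :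
    ∑ w' : Fin 2, adjM (treeT n e ks) (Sum.inr (Sum.inl w)) (Sum.inr (Sum.inl w'))
        * g (Sum.inr (Sum.inl w'))
      = if (w:ℕ) = 0 then g (Sum.inr (Sum.inl 1)) else g (Sum.inr (Sum.inl 0)) := by
  rw [Fin.sum_univ_two, adjM_ite _ _ _ _ adjT_w1_w1, adjM_ite _ _ _ _ adjT_w1_w1]
  have hw : (w:ℕ) = 0 ∨ (w:ℕ) = 1 := by omega
  rcases hw with hw | hw <;> simp [hw]

lemma blockV2 (n e : ℕ) (ks : ℕ → ℕ) (g : (Fin (n-e+1) ⊕ Fin 2 ⊕ Fin 2 ⊕ Fin (e-5)) → ℝ)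
    (w : Fin 2) :
    ∑ w' : Fin 2, adjM (treeT n e ks) (Sum.inr (Sum.inr (Sum.inl w)))
        (Sum.inr (Sum.inr (Sum.inl w'))) * g (Sum.inr (Sum.inr (Sum.inl w')))
      = if (w:ℕ) = 0 then g (Sum.inr (Sum.inr (Sum.inl 1)))
        else g (Sum.inr (Sum.inr (Sum.inl 0))) := by
  rw [Fin.sum_univ_two, adjM_ite _ _ _ _ adjT_w2_w2, adjM_ite _ _ _ _ adjT_w2_w2]
  have hw : (w:ℕ) = 0 ∨ (w:ℕ) = 1 := by omega
  rcases hw with hw | hw <;> simp [hw]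


lemma fin_eq_mk_iff {M c : ℕ} (hc : c < M) (b : Fin M) : b = ⟨c, hc⟩ ↔ (b:ℕ) = c :=
  ⟨fun h => by rw [h], fun h => Fin.ext h⟩

lemma leaf_pos_bound {k r jv : ℕ} (hj : jv < r - 1) : jv*(k+1) + (k+1) ≤ (r-1)*(k+1) := by
  have h1 : jv + 1 ≤ r - 1 := hj
  calc jv*(k+1) + (k+1) = (jv+1)*(k+1) := by ring
    _ ≤ (r-1)*(k+1) := Nat.mul_le_mul_right _ h1

set_option maxHeartbeats 1000000 in
lemma tree_eigen (k r : ℕ) (hk : 1 ≤ k) (hr : 2 ≤ r) (x ρ : ℝ)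
    (hx0 : 0 < x) (hx1 : x < 1) (hρx : ρ * x = x^2 + 1)
    (key : 1 - x^2 - x^4 = x^(k+1) * (1 + x^2 - x^4)) :
    specRad (treeT (r*(k+2)+6) (r+4) (fun t => if t = 0 ∨ t = r-1 then k-1 else k)) = ρ := by
  have hρpos : 0 < ρ := by nlinarith
  have hρne : ρ ≠ 0 := hρpos.ne'
  have hxp : ∀ a : ℕ, (0:ℝ) < x ^ a := fun a => pow_pos hx0 a
  have hFpos : (0:ℝ) < 1 + x^(k+1) := by linarith [hxp (k+1)]
  -- E1
  have hx2sq : ρ^2*x^2 = (x^2+1)^2 := by nlinarith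
  have hcan : x^2*((ρ^2-1)*(1+x^(k+1))) = x^2*(2*ρ*(x+x^k)) := by
    linear_combination (1+x^(k+1))*hx2sq - 2*x*(x+x^k)*hρx + key
  have E1 : (ρ^2-1)*(1+x^(k+1)) = 2*ρ*(x+x^k) :=
    mul_left_cancel₀ (pow_ne_zero 2 hx0.ne') hcan
  set n := r*(k+2)+6 with hn
  set e := r+4 with he
  set ks : ℕ → ℕ := fun t => if t = 0 ∨ t = r-1 then k-1 else k with hks
  set N := n - e with hNdef
  have hN : N = r*(k+1)+2 := by
    have h1 : r*(k+2) = r*(k+1)+r := by ring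
    omega
  have hrk : 2*(k+1) ≤ r*(k+1) := Nat.mul_le_mul_right _ hr
  have hN6 : 2*k + 4 ≤ N := by omega
  have hE5 : e - 5 = r - 1 := by omega
  have hQ : r*(k+1) = (r-1)*(k+1) + (k+1) := by
    have h1 : r = (r-1)+1 := by omega
    calc r*(k+1) = ((r-1)+1)*(k+1) := by rw [← h1]
      _ = (r-1)*(k+1) + (k+1) := by ring
  have hQ' : (k+1)*(r-1) = (r-1)*(k+1) := Nat.mul_comm _ _
  have hsum : ∀ jv : ℕ, jv < r - 1 →
      (∑ t ∈ Finset.range (jv+1), (ks t + 1)) = k + jv*(k+1) := by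
    intro jv
    induction jv with
    | zero =>
      intro _
      rw [Finset.sum_range_one]
      have h0 : ks 0 = k - 1 := by
        show (if (0:ℕ) = 0 ∨ (0:ℕ) = r - 1 then k-1 else k) = k - 1
        rw [if_pos (Or.inl rfl)]
      rw [h0]
      omega
    | succ j ih =>
      intro hj
      rw [Finset.sum_range_succ, ih (by omega)]
      have h0 : ks (j+1) = k := by
        show (if j+1 = 0 ∨ j+1 = r - 1 then k-1 else k) = k
        rw [if_neg (by omega)]
      rw [h0]
      ring
  haveI : Nonempty (Fin (N+1) ⊕ Fin 2 ⊕ Fin 2 ⊕ Fin (e-5)) := ⟨Sum.inr (Sum.inl 0)⟩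
  apply specRad_eq_of_posEigen _ (f := evec x ρ k N)
  · -- positivity
    intro v
    rcases v with i | w | w | j
    · show 0 < pathval x ρ k N (i:ℕ)
      unfold pathval
      split_ifs
      · exact div_pos hFpos (by linarith)
      · exact div_pos hFpos (by norm_num)
      · exact add_pos (hxp _) (hxp _)
    · show 0 < if (w:ℕ) = 0 then (1+x^(k+1))/2 else (1+x^(k+1))/(2*ρ)
      split_ifs
      · exact div_pos hFpos (by norm_num)
      · exact div_pos hFpos (by linarith)
    · show 0 < if (w:ℕ) = 0 then (1+x^(k+1))/2 else (1+x^(k+1))/(2*ρ)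
      split_ifs
      · exact div_pos hFpos (by norm_num)
      · exact div_pos hFpos (by linarith)
    · show 0 < (1+x^(k+1))/ρ
      exact div_pos hFpos hρpos
  · -- eigen equation
    funext v
    simp only [Matrix.mulVec, dotProduct, Pi.smul_apply, smul_eq_mul]
    rw [Fintype.sum_sum_type, Fintype.sum_sum_type, Fintype.sum_sum_type]
    rcases v with i | w | w | j
    · -- v = inl i : main path vertex
      rw [block1, block2, block3, block4]
      rw [show evec x ρ k N (A := N+1) (B := e-5) (Sum.inl i) = pathval x ρ k N (i:ℕ) from rfl]
      have hiv : (i:ℕ) < N + 1 := i.isLt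
      have e0 : evec x ρ k N (A := N+1) (B := e-5) (Sum.inr (Sum.inl (0:Fin 2)))
          = (1+x^(k+1))/2 := rfl
      have f0 : evec x ρ k N (A := N+1) (B := e-5) (Sum.inr (Sum.inr (Sum.inl (0:Fin 2))))
          = (1+x^(k+1))/2 := rfl
      by_cases hc0 : (i:ℕ) = 0
      · rw [hc0]
        rw [ind_sum _ _ ⟨1, by omega⟩ (fun b => by rw [fin_eq_mk_iff]; omega),
          ind_sum_zero _ _ (fun b => by omega),
          if_neg (show ¬(0:ℕ) = 2 from by omega),
          if_neg (show ¬(0:ℕ) = N - 2 from by omega),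
          ind_sum_zero _ _ (fun j => by
            have hj : (j:ℕ) < r - 1 := by have := j.isLt; omega
            rw [hsum _ hj]; omega),
          show evec x ρ k N (A := N+1) (B := e-5) (Sum.inl (⟨1, by omega⟩ : Fin (N+1)))
              = (1+x^(k+1))/2 from pathval_one x ρ k N (by omega),
          pathval_zero]
        field_simp
        ring
      by_cases hcN : (i:ℕ) = N
      · rw [hcN]
        rw [ind_sum_zero _ _ (fun b => by have := b.isLt; omega),
          ind_sum _ _ ⟨N-1, by omega⟩ (fun b => by rw [fin_eq_mk_iff]; omega),
          if_neg (show ¬N = 2 from by omega),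
          if_neg (show ¬N = N - 2 from by omega),
          ind_sum_zero _ _ (fun j => by
            have hj : (j:ℕ) < r - 1 := by have := j.isLt; omega
            have hjb := leaf_pos_bound (k := k) hj
            rw [hsum _ hj]; omega),
          show evec x ρ k N (A := N+1) (B := e-5) (Sum.inl (⟨N-1, by omega⟩ : Fin (N+1)))
              = (1+x^(k+1))/2 from pathval_pen x ρ k N (by omega),
          pathval_last]
        field_simp
        ring
      by_cases hc1 : (i:ℕ) = 1
      · rw [hc1]
        rw [ind_sum _ _ ⟨2, by omega⟩ (fun b => by rw [fin_eq_mk_iff]; omega),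
          ind_sum _ _ ⟨0, by omega⟩ (fun b => by rw [fin_eq_mk_iff]; omega),
          if_neg (show ¬(1:ℕ) = 2 from by omega),
          if_neg (show ¬(1:ℕ) = N - 2 from by omega),
          ind_sum_zero _ _ (fun j => by
            have hj : (j:ℕ) < r - 1 := by have := j.isLt; omega
            rw [hsum _ hj]; omega),
          show evec x ρ k N (A := N+1) (B := e-5) (Sum.inl (⟨2, by omega⟩ : Fin (N+1)))
              = x^1 + x^k from by
            show pathval x ρ k N 2 = _
            rw [pathval_mid x ρ k N 2 0 1 (by omega) (by omega) (by omega) hk (by omega)]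
            rw [show k+1-1 = k from by omega],
          show evec x ρ k N (A := N+1) (B := e-5) (Sum.inl (⟨0, by omega⟩ : Fin (N+1)))
              = (1+x^(k+1))/(2*ρ) from pathval_zero x ρ k N,
          pathval_one x ρ k N (by omega)]
        field_simp
        linear_combination (-1 : ℝ)*E1
      by_cases hcN1 : (i:ℕ) = N - 1
      · rw [hcN1]
        rw [ind_sum _ _ ⟨N, by omega⟩ (fun b => by rw [fin_eq_mk_iff]; omega),
          ind_sum _ _ ⟨N-2, by omega⟩ (fun b => by rw [fin_eq_mk_iff]; omega),
          if_neg (show ¬N - 1 = 2 from by omega),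
          if_neg (show ¬N - 1 = N - 2 from by omega),
          ind_sum_zero _ _ (fun j => by
            have hj : (j:ℕ) < r - 1 := by have := j.isLt; omega
            have hjb := leaf_pos_bound (k := k) hj
            rw [hsum _ hj]; omega),
          show evec x ρ k N (A := N+1) (B := e-5) (Sum.inl (⟨N, by omega⟩ : Fin (N+1)))
              = (1+x^(k+1))/(2*ρ) from pathval_last x ρ k N,
          show evec x ρ k N (A := N+1) (B := e-5) (Sum.inl (⟨N-2, by omega⟩ : Fin (N+1)))
              = x^k + x^1 from by
            show pathval x ρ k N (N-2) = _
            rw [pathval_mid x ρ k N (N-2) (r-1) k (by omega) (by omega) (by omega) (le_refl k)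
              (by omega)]
            rw [show k+1-k = 1 from by omega],
          pathval_pen x ρ k N (by omega)]
        field_simp
        linear_combination (-1 : ℝ)*E1
      by_cases hc2 : (i:ℕ) = 2
      · rw [hc2]
        rw [ind_sum _ _ ⟨3, by omega⟩ (fun b => by rw [fin_eq_mk_iff]; omega),
          ind_sum _ _ ⟨1, by omega⟩ (fun b => by rw [fin_eq_mk_iff]; omega),
          if_pos (show (2:ℕ) = 2 from rfl),
          if_neg (show ¬(2:ℕ) = N - 2 from by omega),
          ind_sum_zero _ _ (fun j => by
            have hj : (j:ℕ) < r - 1 := by have := j.isLt; omega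
            rw [hsum _ hj]; omega),
          show evec x ρ k N (A := N+1) (B := e-5) (Sum.inl (⟨3, by omega⟩ : Fin (N+1)))
              = x^2 + x^(k-1) from by
            show pathval x ρ k N 3 = _
            rcases Nat.lt_or_ge 2 (k+1) with hlt2 | hge2
            · rw [pathval_mid x ρ k N 3 0 2 (by omega) (by omega) (by omega) (by omega)
                (by omega)]
              rw [show k+1-2 = k-1 from by omega]
            · have hk1 : k = 1 := by omega
              rw [pathval_mid x ρ k N 3 1 0 (by omega) (by omega) (by omega) (by omega)
                (by omega)]
              rw [Nat.sub_zero, hk1]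
              norm_num
              ring,
          show evec x ρ k N (A := N+1) (B := e-5) (Sum.inl (⟨1, by omega⟩ : Fin (N+1)))
              = (1+x^(k+1))/2 from pathval_one x ρ k N (by omega),
          e0,
          show pathval x ρ k N 2 = x^1 + x^k from by
            rw [pathval_mid x ρ k N 2 0 1 (by omega) (by omega) (by omega) hk (by omega)]
            rw [show k+1-1 = k from by omega]]
        obtain ⟨m, hm⟩ : ∃ m, k = m + 1 := ⟨k-1, by omega⟩
        rw [show k - 1 = m from by omega, hm]
        linear_combination (-1 - x^m : ℝ) * hρx
      by_cases hcN2 : (i:ℕ) = N - 2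
      · rw [hcN2]
        rw [ind_sum _ _ ⟨N-1, by omega⟩ (fun b => by rw [fin_eq_mk_iff]; omega),
          ind_sum _ _ ⟨N-3, by omega⟩ (fun b => by rw [fin_eq_mk_iff]; omega),
          if_neg (show ¬N - 2 = 2 from by omega),
          if_pos (show N - 2 = N - 2 from rfl),
          ind_sum_zero _ _ (fun j => by
            have hj : (j:ℕ) < r - 1 := by have := j.isLt; omega
            have hjb := leaf_pos_bound (k := k) hj
            rw [hsum _ hj]; omega),
          show evec x ρ k N (A := N+1) (B := e-5) (Sum.inl (⟨N-1, by omega⟩ : Fin (N+1)))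
              = (1+x^(k+1))/2 from pathval_pen x ρ k N (by omega),
          show evec x ρ k N (A := N+1) (B := e-5) (Sum.inl (⟨N-3, by omega⟩ : Fin (N+1)))
              = x^2 + x^(k-1) from by
            show pathval x ρ k N (N-3) = _
            rw [pathval_mid x ρ k N (N-3) (r-1) (k-1) (by omega) (by omega) (by omega)
              (by omega) (by omega)]
            rw [show k+1-(k-1) = 2 from by omega]
            ring,
          f0,
          show pathval x ρ k N (N-2) = x^1 + x^k from by
            rw [pathval_mid x ρ k N (N-2) (r-1) k (by omega) (by omega) (by omega) (le_refl k)
              (by omega)]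
            rw [show k+1-k = 1 from by omega]
            ring]
        obtain ⟨m, hm⟩ : ∃ m, k = m + 1 := ⟨k-1, by omega⟩
        rw [show k - 1 = m from by omega, hm]
        linear_combination (-1 - x^m : ℝ) * hρx
      -- middle region: 3 ≤ i ≤ N - 3
      have h3le : 3 ≤ (i:ℕ) := by omega
      have hleN3 : (i:ℕ) ≤ N - 3 := by omega
      obtain ⟨q, d, hdm, hdlt⟩ : ∃ q d, (k+1)*q + d = (i:ℕ)-1 ∧ d < k+1 :=
        ⟨_, _, Nat.div_add_mod _ _, Nat.mod_lt _ (by omega)⟩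
      rw [ind_sum _ _ ⟨(i:ℕ)+1, by omega⟩ (fun b => by rw [fin_eq_mk_iff]; omega),
        ind_sum _ _ ⟨(i:ℕ)-1, by omega⟩ (fun b => by rw [fin_eq_mk_iff]; omega),
        if_neg (show ¬(i:ℕ) = 2 from by omega),
        if_neg (show ¬(i:ℕ) = N - 2 from by omega)]
      by_cases hd0 : d = 0
      · -- leaf attachment point
        subst hd0
        have hq1 : 1 ≤ q := by
          rcases Nat.eq_zero_or_pos q with hq | hq
          · rw [hq, Nat.mul_zero] at hdm; omega
          · exact hq
        have hiq : (i:ℕ) = (k+1)*q + 1 := by omega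
        have hsplitq : (k+1)*q = (k+1)*(q-1) + (k+1) := by
          have h1 : q = (q-1)+1 := by omega
          calc (k+1)*q = (k+1)*((q-1)+1) := by rw [← h1]
            _ = (k+1)*(q-1) + (k+1) := by ring
        have hqr : q < r := by
          by_contra hqr
          have h1 : (k+1)*r ≤ (k+1)*q := Nat.mul_le_mul_left _ (by omega)
          have h2 : (k+1)*r = r*(k+1) := Nat.mul_comm _ _
          omega
        have hqlt : q - 1 < e - 5 := by omega
        have hvp1 : pathval x ρ k N ((i:ℕ)+1) = x^1 + x^k := by
          rw [pathval_mid x ρ k N ((i:ℕ)+1) q 1 (by omega) (by omega) (by omega) (by omega)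
            (by omega)]
          rw [show k+1-1 = k from by omega]
        have hvm1 : pathval x ρ k N ((i:ℕ)-1) = x^k + x^1 := by
          rw [pathval_mid x ρ k N ((i:ℕ)-1) (q-1) k (by omega) (by omega) (by omega)
            (le_refl k) (by omega)]
          rw [show k+1-k = 1 from by omega]
        have hvi : pathval x ρ k N (i:ℕ) = 1 + x^(k+1) := by
          rw [pathval_mid x ρ k N (i:ℕ) q 0 (by omega) (by omega) (by omega) (by omega)
            (by omega)]
          rw [Nat.sub_zero, pow_zero]
        rw [show evec x ρ k N (A := N+1) (B := e-5)
              (Sum.inl (⟨(i:ℕ)+1, by omega⟩ : Fin (N+1))) = x^1 + x^k from hvp1,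
          show evec x ρ k N (A := N+1) (B := e-5)
              (Sum.inl (⟨(i:ℕ)-1, by omega⟩ : Fin (N+1))) = x^k + x^1 from hvm1,
          hvi]
        rw [ind_sum _ _ ⟨q-1, hqlt⟩ (fun b => by
          have hb : (b:ℕ) < r - 1 := by have := b.isLt; omega
          rw [hsum _ hb, fin_eq_mk_iff]
          constructor
          · intro h
            have h1 : (k+1)*((b:ℕ)+1) = (b:ℕ)*(k+1) + (k+1) := by ring
            have h2 : (k+1)*q = (k+1)*((b:ℕ)+1) := by omega
            have h3 := Nat.eq_of_mul_eq_mul_left (show 0 < k+1 from by omega) h2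
            omega
          · intro h
            have h1 : (k+1)*(q-1) = (q-1)*(k+1) := Nat.mul_comm _ _
            rw [h]
            omega)]
        rw [show evec x ρ k N (A := N+1) (B := e-5)
            (Sum.inr (Sum.inr (Sum.inr (⟨q-1, hqlt⟩ : Fin (e-5))))) = (1+x^(k+1))/ρ from rfl]
        field_simp
        linear_combination (-1 : ℝ)*E1
      · -- generic middle vertex
        obtain ⟨u, wv, hdu, hkw⟩ : ∃ u wv, d = u + 1 ∧ k = u + 1 + wv :=
          ⟨d-1, k-d, by omega, by omega⟩
        have hvp1 : pathval x ρ k N ((i:ℕ)+1) = x^(u+2) + x^wv := by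
          rcases Nat.lt_or_ge (u+2) (k+1) with hlt2 | hge2
          · rw [pathval_mid x ρ k N ((i:ℕ)+1) q (u+2) (by omega) (by omega) (by omega)
              (by omega) (by omega)]
            rw [show k+1-(u+2) = wv from by omega]
          · have hwv0 : wv = 0 := by omega
            have hku : k+1 = u+2 := by omega
            rw [pathval_mid x ρ k N ((i:ℕ)+1) (q+1) 0 (by omega) (by omega) (by omega)
              (by omega)
              (by have h1 : (k+1)*(q+1) = (k+1)*q + (k+1) := by ring
                  omega)]
            rw [Nat.sub_zero, hku, hwv0]
            ring
        have hvm1 : pathval x ρ k N ((i:ℕ)-1) = x^u + x^(wv+2) := by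
          rw [pathval_mid x ρ k N ((i:ℕ)-1) q u (by omega) (by omega) (by omega)
            (by omega) (by omega)]
          rw [show k+1-u = wv+2 from by omega]
        have hvi : pathval x ρ k N (i:ℕ) = x^(u+1) + x^(wv+1) := by
          rw [pathval_mid x ρ k N (i:ℕ) q d (by omega) (by omega) (by omega)
            (by omega) (by omega)]
          rw [hdu, show k+1-(u+1) = wv+1 from by omega]
        rw [show evec x ρ k N (A := N+1) (B := e-5)
              (Sum.inl (⟨(i:ℕ)+1, by omega⟩ : Fin (N+1))) = x^(u+2) + x^wv from hvp1,
          show evec x ρ k N (A := N+1) (B := e-5)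
              (Sum.inl (⟨(i:ℕ)-1, by omega⟩ : Fin (N+1))) = x^u + x^(wv+2) from hvm1,
          hvi]
        rw [ind_sum_zero _ _ (fun j => by
          have hj : (j:ℕ) < r - 1 := by have := j.isLt; omega
          rw [hsum _ hj]
          intro hcon
          have h1 : (k+1)*((j:ℕ)+1) = (j:ℕ)*(k+1) + (k+1) := by ring
          rcases le_or_gt ((j:ℕ)+1) q with hle | hgt
          · have h2 : (k+1)*((j:ℕ)+1) ≤ (k+1)*q := Nat.mul_le_mul_left _ hle
            omega
          · have h2 : (k+1)*(q+1) ≤ (k+1)*((j:ℕ)+1) := Nat.mul_le_mul_left _ (by omega)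
            have h3 : (k+1)*(q+1) = (k+1)*q + (k+1) := by ring
            omega)]
        linear_combination (-(x^u + x^wv)) * hρx
    · -- v = inr (inl w) : pendant path at vertex 2
      rw [blockW1, blockW2]
      rw [show (∑ w' : Fin 2, adjM (treeT n e ks) (Sum.inr (Sum.inl w))
            (Sum.inr (Sum.inr (Sum.inl w'))) * evec x ρ k N (Sum.inr (Sum.inr (Sum.inl w')))) = 0
          from Finset.sum_eq_zero fun w' _ => by rw [adjM_zero _ _ _ adjT_w1_w2, zero_mul]]
      rw [show (∑ j' : Fin (e-5), adjM (treeT n e ks) (Sum.inr (Sum.inl w))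
            (Sum.inr (Sum.inr (Sum.inr j'))) * evec x ρ k N (Sum.inr (Sum.inr (Sum.inr j')))) = 0
          from Finset.sum_eq_zero fun j' _ => by rw [adjM_zero _ _ _ adjT_w1_leaf, zero_mul]]
      have hw : (w:ℕ) = 0 ∨ (w:ℕ) = 1 := by omega
      have h2lt : 2 < N + 1 := by omega
      have hv2 : evec x ρ k N (A := N+1) (B := e-5) (Sum.inl (⟨2, h2lt⟩ : Fin (N+1)))
          = x^1 + x^k := by
        show pathval x ρ k N 2 = _
        rw [pathval_mid x ρ k N 2 0 1 (by omega) (by omega) (by omega) hk (by omega)]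
        rw [show k+1-1 = k from by omega]
      have e0 : evec x ρ k N (A := N+1) (B := e-5) (Sum.inr (Sum.inl (0:Fin 2)))
          = (1+x^(k+1))/2 := rfl
      have e1 : evec x ρ k N (A := N+1) (B := e-5) (Sum.inr (Sum.inl (1:Fin 2)))
          = (1+x^(k+1))/(2*ρ) := rfl
      rcases hw with hw | hw
      · rw [ind_sum _ _ ⟨2, h2lt⟩ (fun b => by rw [fin_eq_mk_iff]; omega)]
        rw [hv2, if_pos hw, e1,
          show evec x ρ k N (Sum.inr (Sum.inl w)) = (1+x^(k+1))/2 from by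
            show (if (w:ℕ) = 0 then _ else _) = _; rw [if_pos hw]]
        field_simp
        linear_combination (-1 : ℝ)*E1
      · rw [ind_sum_zero _ _ (fun b => by omega)]
        rw [if_neg (show ¬ (w:ℕ) = 0 from by omega), e0,
          show evec x ρ k N (Sum.inr (Sum.inl w)) = (1+x^(k+1))/(2*ρ) from by
            show (if (w:ℕ) = 0 then _ else _) = _; rw [if_neg (show ¬ (w:ℕ) = 0 from by omega)]]
        field_simp
        ring
    · -- v = inr (inr (inl w)) : pendant path at vertex N-2
      rw [blockV1, blockV2]
      rw [show (∑ w' : Fin 2, adjM (treeT n e ks) (Sum.inr (Sum.inr (Sum.inl w)))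
            (Sum.inr (Sum.inl w')) * evec x ρ k N (Sum.inr (Sum.inl w'))) = 0
          from Finset.sum_eq_zero fun w' _ => by
            rw [adjM_comm, adjM_zero _ _ _ adjT_w1_w2, zero_mul]]
      rw [show (∑ j' : Fin (e-5), adjM (treeT n e ks) (Sum.inr (Sum.inr (Sum.inl w)))
            (Sum.inr (Sum.inr (Sum.inr j'))) * evec x ρ k N (Sum.inr (Sum.inr (Sum.inr j')))) = 0
          from Finset.sum_eq_zero fun j' _ => by rw [adjM_zero _ _ _ adjT_w2_leaf, zero_mul]]
      have hw : (w:ℕ) = 0 ∨ (w:ℕ) = 1 := by omega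
      have hlt : N - 2 < N + 1 := by omega
      have hvN2 : evec x ρ k N (A := N+1) (B := e-5) (Sum.inl (⟨N-2, hlt⟩ : Fin (N+1)))
          = x^k + x^1 := by
        show pathval x ρ k N (N-2) = _
        rw [pathval_mid x ρ k N (N-2) (r-1) k (by omega) (by omega) (by omega) (le_refl k)
          (by omega)]
        rw [show k+1-k = 1 from by omega]
      have e0 : evec x ρ k N (A := N+1) (B := e-5) (Sum.inr (Sum.inr (Sum.inl (0:Fin 2))))
          = (1+x^(k+1))/2 := rfl
      have e1 : evec x ρ k N (A := N+1) (B := e-5) (Sum.inr (Sum.inr (Sum.inl (1:Fin 2))))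
          = (1+x^(k+1))/(2*ρ) := rfl
      rcases hw with hw | hw
      · rw [ind_sum _ _ ⟨N-2, hlt⟩ (fun b => by rw [fin_eq_mk_iff]; omega)]
        rw [hvN2, if_pos hw, e1,
          show evec x ρ k N (Sum.inr (Sum.inr (Sum.inl w))) = (1+x^(k+1))/2 from by
            show (if (w:ℕ) = 0 then _ else _) = _; rw [if_pos hw]]
        field_simp
        linear_combination (-1 : ℝ)*E1
      · rw [ind_sum_zero _ _ (fun b => by omega)]
        rw [if_neg (show ¬ (w:ℕ) = 0 from by omega), e0,
          show evec x ρ k N (Sum.inr (Sum.inr (Sum.inl w))) = (1+x^(k+1))/(2*ρ) from by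
            show (if (w:ℕ) = 0 then _ else _) = _; rw [if_neg (show ¬ (w:ℕ) = 0 from by omega)]]
        field_simp
        ring
    · -- v = leaf j
      rw [blockL1]
      rw [show (∑ w' : Fin 2, adjM (treeT n e ks) (Sum.inr (Sum.inr (Sum.inr j)))
            (Sum.inr (Sum.inl w')) * evec x ρ k N (Sum.inr (Sum.inl w'))) = 0
          from Finset.sum_eq_zero fun w' _ => by
            rw [adjM_comm, adjM_zero _ _ _ adjT_w1_leaf, zero_mul]]
      rw [show (∑ w' : Fin 2, adjM (treeT n e ks) (Sum.inr (Sum.inr (Sum.inr j)))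
            (Sum.inr (Sum.inr (Sum.inl w'))) * evec x ρ k N (Sum.inr (Sum.inr (Sum.inl w')))) = 0
          from Finset.sum_eq_zero fun w' _ => by
            rw [adjM_comm, adjM_zero _ _ _ adjT_w2_leaf, zero_mul]]
      rw [show (∑ j' : Fin (e-5), adjM (treeT n e ks) (Sum.inr (Sum.inr (Sum.inr j)))
            (Sum.inr (Sum.inr (Sum.inr j'))) * evec x ρ k N (Sum.inr (Sum.inr (Sum.inr j')))) = 0
          from Finset.sum_eq_zero fun j' _ => by rw [adjM_zero _ _ _ adjT_leaf_leaf, zero_mul]]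
      have hj : (j:ℕ) < r - 1 := by have := j.isLt; omega
      have hjb := leaf_pos_bound (k := k) hj
      have hplt : 2 + k + (j:ℕ)*(k+1) < N + 1 := by omega
      have hvp : pathval x ρ k N (2 + k + (j:ℕ)*(k+1)) = 1 + x^(k+1) := by
        rw [pathval_mid x ρ k N (2 + k + (j:ℕ)*(k+1)) ((j:ℕ)+1) 0 (by omega) (by omega)
          (by omega) (by omega) (by have h1 : (k+1)*((j:ℕ)+1) = (j:ℕ)*(k+1) + (k+1) := by ring
                                    omega)]
        rw [show k+1-0 = k+1 from by omega, pow_zero]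
      rw [show (∑ b : Fin (N+1), (if ((b:ℕ) = 2 + ∑ t ∈ Finset.range ((j:ℕ)+1), (ks t + 1))
            then (1:ℝ) else 0) * evec x ρ k N (Sum.inl b))
          = evec x ρ k N (Sum.inl (⟨2 + k + (j:ℕ)*(k+1), hplt⟩ : Fin (N+1)))
          from ind_sum _ _ _ (fun b => by rw [fin_eq_mk_iff, hsum (j:ℕ) hj]; omega)]
      rw [show evec x ρ k N (Sum.inl (⟨2 + k + (j:ℕ)*(k+1), hplt⟩ : Fin (N+1)))
          = 1 + x^(k+1) from hvp]
      show 1 + x^(k+1) + (0 + (0 + 0)) = ρ * ((1+x^(k+1))/ρ)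
      field_simp
      ring



/-- Lemma 2.13: the equation `d_2 = 2x_1^k/(1 − x_1^{k+1})` has a unique root `ρ_k` in
`(√(2+√5), ∞)`, and for every `r ≥ 2`, the spectral radius of `T_{(k−1,k,…,k,k−1)}`
(with `r` parameters, so `e = r + 4` and `n = r(k+2) + 6`) equals `ρ_k`. -/
theorem specRad_special_tree (k : ℕ) (hk : 1 ≤ k) :
    ∃ ρk : ℝ,
      (Real.sqrt (2 + Real.sqrt 5) < ρk ∧
        d2f ρk = 2 * x1 ρk ^ k / (1 - x1 ρk ^ (k + 1))) ∧
      (∀ x : ℝ, Real.sqrt (2 + Real.sqrt 5) < x →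
        d2f x = 2 * x1 x ^ k / (1 - x1 x ^ (k + 1)) → x = ρk) ∧
      (∀ r : ℕ, 2 ≤ r →
        specRad (treeT (r * (k + 2) + 6) (r + 4)
          (fun t => if t = 0 ∨ t = r - 1 then k - 1 else k)) = ρk) := by
  obtain ⟨ρ, ⟨hρgt, hρeq⟩, huniq⟩ := root_exists_unique k hk
  refine ⟨ρ, ⟨hρgt, hρeq⟩, huniq, ?_⟩
  intro r hr
  have hρ2 : 2 < ρ := lt_trans l0_gt_two hρgt
  obtain ⟨hx0, hx1lt, hx2gt, hmul, hadd⟩ := x_facts hρ2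
  set x := x1 ρ with hxdef
  have hρx : ρ * x = x^2 + 1 := by
    have : x * x2 ρ = 1 := hmul
    nlinarith [hadd]
  have hden : (1:ℝ) - x^(k+1) ≠ 0 := by
    have : x^(k+1) < 1 := pow_lt_one₀ hx0.le hx1lt (by omega)
    linarith
  rw [eq_div_iff hden] at hρeq
  have hd2 : x^3 * d2f ρ = 1 - x^2 - x^4 := by
    show x^3 * (x2 ρ ^ 3 - ρ) = 1 - x^2 - x^4
    linear_combination (x^2*(x2 ρ)^2 + x*(x2 ρ) + 1)*hmul - x^2*hρx
  have key : 1 - x^2 - x^4 = x^(k+1) * (1 + x^2 - x^4) := by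
    linear_combination (x^(k+1) - 1)*hd2 + x^3*hρeq
  exact tree_eigen k r hk hr x ρ hx0 hx1lt hρx key
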